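/- (Translation invariance) For every horizon m ≥ 0, every μ ∈ ℝ, every n > 0, every λ ∈ ℝ and every c ∈ ℝ, the Gaussian one-armed-bandit value function satisfies V_m(μ,n,γ,τ,λ) = V_m(μ − c, n, γ, τ, λ − c). -/
import Mathlib


open MeasureTheory ProbabilityTheory

/-- Finite-horizon value function of the Gaussian one-armed bandit:
`V γ τ m μ n λ`, with discount `γ`, observation precision `τ`, horizon `m`,
posterior state `(μ, n)` and safe-arm reward `λ`. The expectation over the
next observation is taken under the Gaussian predictive distribution
`𝒩(μ, 1/n + 1/τ)`. -/
noncomputable def V (γ τ : ℝ) : ℕ → ℝ → ℝ → ℝ → ℝ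
  | 0, μ, _n, lam => max (μ - lam) 0 / (1 - γ)
  | m + 1, μ, n, lam =>
      max (μ - lam + γ * ∫ y, V γ τ m ((n * μ + τ * y) / (n + τ)) (n + τ) lam
        ∂(gaussianReal μ (1 / n + 1 / τ).toNNReal)) 0

/-- Translation invariance: `V_m(μ,n,γ,τ,λ) = V_m(μ − c, n, γ, τ, λ − c)`. -/
theorem nmab_translation_invariance (γ τ : ℝ)
    (hγ0 : 0 ≤ γ) (hγ1 : γ < 1) (hτ : 0 < τ) :
    ∀ m : ℕ, ∀ μ n lam c : ℝ, 0 < n →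
      V γ τ m μ n lam = V γ τ m (μ - c) n (lam - c) := by
  intro m
  induction m with
  | zero =>
    intro μ n lam c hn
    simp only [V]
    congr 2
    ring
  | succ m ih =>
    intro μ n lam c hn
    have hnτ : n + τ ≠ 0 := by positivity
    simp only [V]
    have hmap : gaussianReal (μ - c) (1 / n + 1 / τ).toNNReal
        = (gaussianReal μ (1 / n + 1 / τ).toNNReal).map
            (MeasurableEquiv.addRight (-c)) := by
      rw [show ⇑(MeasurableEquiv.addRight (-c)) = (· + (-c)) from rfl,
        gaussianReal_map_add_const, sub_eq_add_neg]
    have hint : (∫ y, V γ τ m ((n * μ + τ * y) / (n + τ)) (n + τ) lam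
          ∂(gaussianReal μ (1 / n + 1 / τ).toNNReal))
        = ∫ y, V γ τ m ((n * (μ - c) + τ * y) / (n + τ)) (n + τ) (lam - c)
          ∂(gaussianReal (μ - c) (1 / n + 1 / τ).toNNReal) := by
      rw [hmap, MeasureTheory.integral_map_equiv]
      refine integral_congr_ae (Filter.Eventually.of_forall fun y => ?_)
      have harg : (n * (μ - c) + τ * (MeasurableEquiv.addRight (-c) y)) / (n + τ)
          = (n * μ + τ * y) / (n + τ) - c := by
        show (n * (μ - c) + τ * (y + -c)) / (n + τ) = _
        field_simp
        ring
      beta_reduce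
      rw [harg, ← ih ((n * μ + τ * y) / (n + τ)) (n + τ) lam c (by positivity)]
    rw [hint]
    congr 2
    ring
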